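/- Let d ≥ 1, 1 ≤ k ≤ d, ρ > 0, and let Σ be a symmetric positive definite d×d real matrix. For v ∈ ℝ^d define F(v) := ∫_ℝ (max(|t| − ρ, 0))² dμ_v(t), where μ_v is the Gaussian measure on ℝ with mean 0 and variance vᵀΣv. Then for every v̂ ∈ V_k: F(v̂) = sup_{v ∈ V_k} F(v) if and only if v̂ᵀΣv̂ = sup_{v ∈ V_k} vᵀΣv. In other words, the set of maximizers of F over V_k coincides with the set of maximizers of the quadratic form v ↦ vᵀΣv over V_k. -/

import Mathlib

open MeasureTheory ProbabilityTheory Real Set NNReal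

namespace Stmt9Aux

noncomputable def f (ρ : ℝ) (t : ℝ) : ℝ := max (|t| - ρ) 0 ^ 2

lemma f_cont (ρ : ℝ) : Continuous (f ρ) :=
  ((continuous_abs.sub continuous_const).max continuous_const).pow 2

lemma f_nonneg (ρ t : ℝ) : 0 ≤ f ρ t := pow_nonneg (le_max_right _ _) 2

lemma f_mono (ρ : ℝ) {a b : ℝ} (h : |a| ≤ |b|) : f ρ a ≤ f ρ b :=
  pow_le_pow_left₀ (le_max_right _ _) (max_le_max (by linarith) le_rfl) 2

lemma f_strict {ρ : ℝ} (hρ : 0 < ρ) {a b : ℝ} (ha : 0 ≤ a) (hab : a < b) (hb : ρ < b) :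
    f ρ a < f ρ b := by
  have h1 : max (|a| - ρ) 0 < b - ρ := by
    rw [abs_of_nonneg ha]
    exact max_lt (by linarith) (by linarith)
  have h2 : max (|b| - ρ) 0 = b - ρ := by
    rw [abs_of_nonneg (by linarith), max_eq_left (by linarith)]
  rw [f, f, h2]
  exact pow_lt_pow_left₀ h1 (le_max_right _ _) two_ne_zero

lemma f_le_sq (ρ : ℝ) (hρ : 0 ≤ ρ) (t : ℝ) : f ρ t ≤ t ^ 2 := by
  have : max (|t| - ρ) 0 ≤ |t| := max_le (by linarith [abs_nonneg t]) (abs_nonneg t)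
  calc f ρ t ≤ |t| ^ 2 := pow_le_pow_left₀ (le_max_right _ _) this 2
  _ = t ^ 2 := sq_abs t

lemma f_integrable (ρ : ℝ) (hρ : 0 ≤ ρ) {v : ℝ≥0} (hv : v ≠ 0) :
    Integrable (f ρ) (gaussianReal 0 v) := by
  rw [gaussianReal_of_var_ne_zero _ hv,
    integrable_withDensity_iff (measurable_gaussianPDF 0 v)
      (Filter.Eventually.of_forall fun x => ENNReal.ofReal_lt_top)]
  have hv' : (0:ℝ) < (v:ℝ) := by positivity
  have hb : (0:ℝ) < (2 * (v:ℝ))⁻¹ := by positivity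
  have hint : Integrable (fun x : ℝ => (Real.sqrt (2 * π * v))⁻¹ *
      (x ^ 2 * Real.exp (-(2 * (v:ℝ))⁻¹ * x ^ 2))) volume := by
    refine Integrable.const_mul ?_ _
    have := integrable_rpow_mul_exp_neg_mul_sq hb (s := 2) (by norm_num)
    simpa [Real.rpow_natCast] using this
  refine hint.mono' ?_ ?_
  · exact ((f_cont ρ).measurable.mul
      (measurable_gaussianPDF 0 v).ennreal_toReal).aestronglyMeasurable
  · filter_upwards with x
    have hpdf : (gaussianPDF 0 v x).toReal = gaussianPDFReal 0 v x :=
      ENNReal.toReal_ofReal (gaussianPDFReal_nonneg 0 v x)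
    rw [Real.norm_eq_abs, abs_of_nonneg (mul_nonneg (f_nonneg ρ x) ENNReal.toReal_nonneg), hpdf]
    simp only [gaussianPDFReal, sub_zero]
    have hexp : Real.exp (-x ^ 2 / (2 * (v:ℝ))) = Real.exp (-(2 * (v:ℝ))⁻¹ * x ^ 2) := by
      congr 1
      field_simp
    calc f ρ x * ((Real.sqrt (2 * π * v))⁻¹ * Real.exp (-x ^ 2 / (2 * (v:ℝ))))
        ≤ x ^ 2 * ((Real.sqrt (2 * π * v))⁻¹ * Real.exp (-x ^ 2 / (2 * (v:ℝ)))) :=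
          mul_le_mul_of_nonneg_right (f_le_sq ρ hρ x) (by positivity)
      _ = (Real.sqrt (2 * π * v))⁻¹ * (x ^ 2 * Real.exp (-(2 * (v:ℝ))⁻¹ * x ^ 2)) := by
          rw [hexp]; ring


lemma gaussian_map (v : ℝ≥0) :
    (gaussianReal 0 1).map (fun t => Real.sqrt v * t) = gaussianReal 0 v := by
  have h := gaussianReal_map_const_mul (μ := 0) (v := 1) (Real.sqrt v)
  have h2 : (NNReal.mk (Real.sqrt v ^ 2) (sq_nonneg _)) * 1 = v := by
    ext
    simp [Real.sq_sqrt v.coe_nonneg]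
  rw [h2, mul_zero] at h
  exact h

lemma gaussian_Ioi_pos {v : ℝ≥0} (hv : v ≠ 0) (a : ℝ) :
    0 < gaussianReal 0 v (Set.Ioi a) := by
  rw [pos_iff_ne_zero, gaussianReal_apply 0 hv]
  intro h0
  rw [lintegral_eq_zero_iff (measurable_gaussianPDF 0 v)] at h0
  rw [Filter.EventuallyEq, ae_restrict_iff' measurableSet_Ioi] at h0
  have : ∀ᵐ x ∂(volume : Measure ℝ), x ∉ Set.Ioi a := by
    filter_upwards [h0] with x hx
    intro hmem
    exact absurd (hx hmem) (ne_of_gt (gaussianPDF_pos 0 hv x))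
  rw [ae_iff] at this
  simp only [not_not] at this
  have h1 : (volume : Measure ℝ) (Set.Ioi a) = 0 := this
  rw [Real.volume_Ioi] at h1
  exact ENNReal.top_ne_zero h1

noncomputable def g (ρ : ℝ) (v : ℝ≥0) : ℝ := ∫ t, f ρ t ∂gaussianReal 0 v

lemma g_pos {ρ : ℝ} (hρ : 0 < ρ) {v : ℝ≥0} (hv : v ≠ 0) : 0 < g ρ v := by
  rw [g, integral_pos_iff_support_of_nonneg (fun x => f_nonneg ρ x)
    (f_integrable ρ hρ.le hv)]
  refine lt_of_lt_of_le (gaussian_Ioi_pos hv ρ) (measure_mono ?_)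
  intro t ht
  simp only [Function.mem_support]
  exact ne_of_gt (lt_of_lt_of_le (by nlinarith [Set.mem_Ioi.mp ht] : (0:ℝ) < (t - ρ)^2)
    (le_of_eq (by
      rw [f, abs_of_nonneg (le_trans hρ.le (le_of_lt (Set.mem_Ioi.mp ht))),
        max_eq_left (by linarith [Set.mem_Ioi.mp ht])])))

lemma g_eq_int (ρ : ℝ) (v : ℝ≥0) :
    g ρ v = ∫ t, f ρ (Real.sqrt v * t) ∂gaussianReal 0 1 := by
  rw [g, ← gaussian_map v, integral_map (by fun_prop) ((f_cont ρ).aestronglyMeasurable)]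

lemma g_strictMono {ρ : ℝ} (hρ : 0 < ρ) {v₁ v₂ : ℝ≥0} (hv₁ : v₁ ≠ 0) (h : v₁ < v₂) :
    g ρ v₁ < g ρ v₂ := by
  have hv₂ : v₂ ≠ 0 := by rintro rfl; exact absurd h (by simp)
  set c₁ := Real.sqrt v₁ with hc₁
  set c₂ := Real.sqrt v₂ with hc₂
  have hc₁pos : 0 < c₁ := Real.sqrt_pos.mpr (by positivity)
  have hc₂pos : 0 < c₂ := Real.sqrt_pos.mpr (by positivity)
  have hcc : c₁ < c₂ := by
    apply Real.sqrt_lt_sqrt v₁.coe_nonneg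
    exact_mod_cast h
  have hi₁ : Integrable (fun t => f ρ (c₁ * t)) (gaussianReal 0 1) := by
    have := f_integrable ρ hρ.le hv₁
    rw [← gaussian_map v₁] at this
    exact (integrable_map_measure ((f_cont ρ).aestronglyMeasurable) (by fun_prop)).mp this
  have hi₂ : Integrable (fun t => f ρ (c₂ * t)) (gaussianReal 0 1) := by
    have := f_integrable ρ hρ.le hv₂
    rw [← gaussian_map v₂] at this
    exact (integrable_map_measure ((f_cont ρ).aestronglyMeasurable) (by fun_prop)).mp this
  rw [g_eq_int, g_eq_int, ← sub_pos, ← integral_sub hi₂ hi₁]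
  rw [integral_pos_iff_support_of_nonneg]
  · refine lt_of_lt_of_le (gaussian_Ioi_pos one_ne_zero (ρ / c₂)) (measure_mono ?_)
    intro t ht
    have ht' : ρ / c₂ < t := Set.mem_Ioi.mp ht
    have htpos : 0 < t := lt_trans (by positivity) ht'
    have h1 : ρ < c₂ * t := by
      rw [div_lt_iff₀ hc₂pos] at ht'
      linarith [ht']
    have h2 : c₁ * t < c₂ * t := by nlinarith
    simp only [Function.mem_support]
    exact ne_of_gt (sub_pos.mpr (f_strict hρ (by positivity) h2 h1))
  · intro t
    simp only [Pi.zero_apply, sub_nonneg]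
    apply f_mono
    rw [abs_mul, abs_mul]
    exact mul_le_mul_of_nonneg_right (by rw [abs_of_pos hc₁pos, abs_of_pos hc₂pos]; exact hcc.le)
      (abs_nonneg t)
  · exact hi₂.sub hi₁

end Stmt9Aux

theorem stmt9 (d k : ℕ) (hd : 1 ≤ d) (hk1 : 1 ≤ k) (hkd : k ≤ d)
    (ρ : ℝ) (hρ : 0 < ρ) (S : Matrix (Fin d) (Fin d) ℝ) (hS : S.PosDef)
    (Vk : Set (Fin d → ℝ))
    (hVk : Vk = {v : Fin d → ℝ |
        Real.sqrt (∑ i, v i ^ 2) = 1 ∧ {i | v i ≠ 0}.ncard ≤ k})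
    (F Q : (Fin d → ℝ) → ℝ)
    (hF : F = fun v => ∫ t, max (|t| - ρ) 0 ^ 2
        ∂(gaussianReal 0 (Real.toNNReal (∑ i, ∑ j, v i * S i j * v j))))
    (hQ : Q = fun v => ∑ i, ∑ j, v i * S i j * v j)
    (vhat : Fin d → ℝ) (hvhat : vhat ∈ Vk) :
    F vhat = sSup (F '' Vk) ↔ Q vhat = sSup (Q '' Vk) := by
  have hQcont : Continuous Q := by
    rw [hQ]
    exact continuous_finset_sum _ fun i _ => continuous_finset_sum _ fun j _ =>
      ((continuous_apply i).mul continuous_const).mul (continuous_apply j)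
  -- membership facts
  have hmem_sum : ∀ v ∈ Vk, ∑ i, v i ^ 2 = 1 := by
    intro v hv
    rw [hVk] at hv
    have h1 := hv.1
    have h2 : (0:ℝ) ≤ ∑ i, v i ^ 2 := Finset.sum_nonneg fun i _ => sq_nonneg _
    nlinarith [Real.sq_sqrt h2, h1]
  -- closedness
  have hclosed : IsClosed Vk := by
    rw [hVk]
    have heq : {v : Fin d → ℝ | Real.sqrt (∑ i, v i ^ 2) = 1 ∧ {i | v i ≠ 0}.ncard ≤ k} =
        {v : Fin d → ℝ | Real.sqrt (∑ i, v i ^ 2) = 1} ∩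
        {v : Fin d → ℝ | {i | v i ≠ 0}.ncard ≤ k} := rfl
    rw [heq]
    refine IsClosed.inter ?_ ?_
    · exact isClosed_eq (Real.continuous_sqrt.comp
        (continuous_finset_sum _ fun i _ => (continuous_apply i).pow 2)) continuous_const
    · have hB : {v : Fin d → ℝ | {i | v i ≠ 0}.ncard ≤ k} =
          ⋃ T ∈ {T : Finset (Fin d) | T.card ≤ k}, {v : Fin d → ℝ | ∀ i ∉ T, v i = 0} := by
        ext v
        simp only [Set.mem_setOf_eq, Set.mem_iUnion]
        constructor
        · intro hv
          refine ⟨(Set.toFinite {i | v i ≠ 0}).toFinset, ?_, ?_⟩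
          · rw [← Set.ncard_eq_toFinset_card _ (Set.toFinite _)]; exact hv
          · intro i hi
            by_contra hne
            exact hi ((Set.Finite.mem_toFinset _).mpr hne)
        · rintro ⟨T, hT, hvT⟩
          calc {i | v i ≠ 0}.ncard ≤ (T : Set (Fin d)).ncard := by
                apply Set.ncard_le_ncard _ (Set.toFinite _)
                intro i hi
                by_contra hiT
                exact hi (hvT i hiT)
            _ = T.card := Set.ncard_coe_finset T
            _ ≤ k := hT
      rw [hB]
      refine Set.Finite.isClosed_biUnion (Set.toFinite _) fun T _ => ?_
      have : {v : Fin d → ℝ | ∀ i ∉ T, v i = 0} = ⋂ i ∈ Tᶜ, {v : Fin d → ℝ | v i = 0} := by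
        ext v; simp
      rw [this]
      exact isClosed_biInter fun i _ => isClosed_eq (continuous_apply i) continuous_const
  have hbdd : Bornology.IsBounded Vk := by
    refine (Metric.isBounded_closedBall (x := (0 : Fin d → ℝ)) (r := 1)).subset ?_
    intro v hv
    rw [Metric.mem_closedBall, dist_zero_right]
    rw [pi_norm_le_iff_of_nonneg zero_le_one]
    intro i
    rw [Real.norm_eq_abs, ← sq_le_one_iff_abs_le_one]
    calc v i ^ 2 ≤ ∑ j, v j ^ 2 :=
          Finset.single_le_sum (fun j _ => sq_nonneg (v j)) (Finset.mem_univ i)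
      _ = 1 := hmem_sum v hv
  have hcomp : IsCompact Vk := Metric.isCompact_iff_isClosed_bounded.mpr ⟨hclosed, hbdd⟩
  obtain ⟨w, hwmem, hwmax⟩ := hcomp.exists_isMaxOn ⟨vhat, hvhat⟩ hQcont.continuousOn
  have hQw : ∀ v ∈ Vk, Q v ≤ Q w := hwmax
  have hQpos : ∀ v ∈ Vk, 0 < Q v := by
    intro v hv
    have hvne : v ≠ 0 := by
      intro h0
      have := hmem_sum v hv
      rw [h0] at this
      simp at this
    have hpd := hS.dotProduct_mulVec_pos hvne
    have hdp : Q v = dotProduct (star v) (S.mulVec v) := by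
      rw [hQ]
      simp only [star_trivial, dotProduct, Matrix.mulVec, Finset.mul_sum]
      exact Finset.sum_congr rfl fun i _ => Finset.sum_congr rfl fun j _ => by ring
    rw [hdp]
    exact hpd
  have hFg : ∀ v, F v = Stmt9Aux.g ρ (Q v).toNNReal := by
    intro v
    rw [hF, hQ]
    rfl
  have key : ∀ v ∈ Vk, Q v < Q w → F v < F w := by
    intro v hv hlt
    rw [hFg, hFg]
    exact Stmt9Aux.g_strictMono hρ (Real.toNNReal_pos.mpr (hQpos v hv)).ne'
      ((Real.toNNReal_lt_toNNReal_iff (hQpos w hwmem)).mpr hlt)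
  have hFle : ∀ v ∈ Vk, F v ≤ F w := by
    intro v hv
    rcases eq_or_lt_of_le (hQw v hv) with he | hlt
    · rw [hFg, hFg, he]
    · exact (key v hv hlt).le
  have hsupF : sSup (F '' Vk) = F w :=
    IsGreatest.csSup_eq ⟨⟨w, hwmem, rfl⟩, by rintro x ⟨v, hv, rfl⟩; exact hFle v hv⟩
  have hsupQ : sSup (Q '' Vk) = Q w :=
    IsGreatest.csSup_eq ⟨⟨w, hwmem, rfl⟩, by rintro x ⟨v, hv, rfl⟩; exact hQw v hv⟩
  rw [hsupF, hsupQ]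
  constructor
  · intro hFeq
    by_contra hne
    exact absurd hFeq (ne_of_lt (key vhat hvhat (lt_of_le_of_ne (hQw vhat hvhat) hne)))
  · intro hQeq
    rw [hFg, hFg, hQeq]
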